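/- arXiv:1811.07244 — 2 statements merged into one kernel-verified Lean document; each statement's English description precedes it below -/
import Mathlib

section
/- Let p be a prime with p ≡ 11 (mod 24) or p ≡ 23 (mod 24), and let k be any integer. Then there exist integers r₁, r_p, v₁, v_p with r₁ + r_p = 2k, 24v₁ = p·r₁ + r_p, and 24v_p = r₁ + p·r_p. -/
theorem stmt_5 (p : ℕ) (hp : p.Prime) (hp24 : p % 24 = 11 ∨ p % 24 = 23)
    (k : ℤ) :
    ∃ r₁ rp v₁ vp : ℤ, r₁ + rp = 2 * k ∧
      24 * v₁ = (p : ℤ) * r₁ + rp ∧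
      24 * vp = r₁ + (p : ℤ) * rp := by
  obtain ⟨a, ha⟩ : ∃ a : ℕ, p = 24 * a + p % 24 :=
    ⟨p / 24, by omega⟩
  rcases hp24 with h | h <;> rw [h] at ha
  · refine ⟨-5 * k, 7 * k, k * (-5 * (a : ℤ) - 2), k * (7 * (a : ℤ) + 3), by ring, ?_, ?_⟩ <;>
    · have : (p : ℤ) = 24 * (a : ℤ) + 11 := by exact_mod_cast congrArg (Nat.cast : ℕ → ℤ) ha
      rw [this]; ring
  · refine ⟨k, k, k * ((a : ℤ) + 1), k * ((a : ℤ) + 1), by ring, ?_, ?_⟩ <;>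
    · have : (p : ℤ) = 24 * (a : ℤ) + 23 := by exact_mod_cast congrArg (Nat.cast : ℕ → ℤ) ha
      rw [this]; ring
end

section
/- Let N be a squarefree positive integer with divisors δ, and suppose the integers (r_δ)_{δ∣N} and k satisfy Σ_{δ∣N} r_δ = 2k and 24 ∣ Σ_{δ∣N} (N/δ)·r_δ. Then gcd(gcd over proper divisors δ of N of (N/δ − 1), 24) divides 2k. -/
theorem stmt_15 (N : ℕ) (hN : 0 < N) (hsq : Squarefree N)
    (r : ℕ → ℤ) (k : ℤ)
    (h1 : ∑ δ ∈ N.divisors, r δ = 2 * k)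
    (h2 : (24 : ℤ) ∣ ∑ δ ∈ N.divisors, (N / δ : ℕ) * r δ) :
    ((Nat.gcd ((N.divisors.erase N).gcd (fun δ => N / δ - 1)) 24 : ℕ) : ℤ) ∣ 2 * k := by
  set d : ℕ := Nat.gcd ((N.divisors.erase N).gcd (fun δ => N / δ - 1)) 24 with hd
  have hd24 : (d : ℤ) ∣ 24 := Int.natCast_dvd_natCast.mpr (Nat.gcd_dvd_right _ _)
  have hsum : (d : ℤ) ∣ ∑ δ ∈ N.divisors, (N / δ : ℕ) * r δ := hd24.trans h2
  have hdiff : (d : ℤ) ∣ ∑ δ ∈ N.divisors, ((N / δ : ℕ) * r δ - r δ) := by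
    apply Finset.dvd_sum
    intro δ hδ
    rcases Nat.mem_divisors.mp hδ with ⟨hdvd, hNne⟩
    by_cases hδN : δ = N
    · subst hδN
      simp [Nat.div_self hN]
    · have hmem : δ ∈ N.divisors.erase N := Finset.mem_erase.mpr ⟨hδN, hδ⟩
      have h1 : (d : ℕ) ∣ N / δ - 1 :=
        (Nat.gcd_dvd_left _ _).trans (Finset.gcd_dvd hmem)
      have hpos : 1 ≤ N / δ := Nat.one_le_div_iff (Nat.pos_of_mem_divisors hδ) |>.mpr
        (Nat.le_of_dvd hN hdvd)
      have : (d : ℤ) ∣ ((N / δ : ℕ) : ℤ) - 1 := by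
        have := Int.natCast_dvd_natCast.mpr h1
        rwa [Nat.cast_sub hpos, Nat.cast_one] at this
      have : (d : ℤ) ∣ (((N / δ : ℕ) : ℤ) - 1) * r δ := this.mul_right _
      rwa [sub_mul, one_mul] at this
  rw [Finset.sum_sub_distrib] at hdiff
  have := dvd_sub hsum hdiff
  simpa [h1] using this
end
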